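/- Schmerl's on-line chain partition: every on-line presented 2-dimensional poset of width at most ω can be partitioned on-line into at most ω(ω+1)/2 chains. Formally: there is a function assigning to each new element v (given its comparabilities to previously presented elements of a poset that is the intersection of two given linear orders) a label from a set of size ω(ω+1)/2, such that elements with equal labels are pairwise comparable, where ω bounds the width of the poset. -/

import Mathlib

open Set

namespace Schmerl

def rel1 (a b : ℝ × ℝ) : Prop := a.1 < b.1 ∧ b.2 < a.2
def rel2 (a b : ℝ × ℝ) : Prop := b.1 < a.1 ∧ a.2 < b.2

lemma rel1_trans : Transitive rel1 := fun _ _ _ h1 h2 => ⟨h1.1.trans h2.1, h2.2.trans h1.2⟩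
lemma rel2_trans : Transitive rel2 := fun _ _ _ h1 h2 => ⟨h2.1.trans h1.1, h1.2.trans h2.2⟩
lemma rel1_ne {a b : ℝ × ℝ} (h : rel1 a b) : a ≠ b := fun e => absurd h.1 (by rw [e]; exact lt_irrefl _)
lemma rel2_ne {a b : ℝ × ℝ} (h : rel2 a b) : a ≠ b := fun e => absurd h.1 (by rw [e]; exact lt_irrefl _)

def chainSet (r : ℝ × ℝ → ℝ × ℝ → Prop) (l : List (ℝ × ℝ)) (v : ℝ × ℝ) : Set ℕ :=
  {k | ∃ c : List (ℝ × ℝ), c.Chain' r ∧ (∀ x ∈ c, x ∈ l) ∧ c.getLast? = some v ∧ c.length = k}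

noncomputable def mx (r : ℝ × ℝ → ℝ × ℝ → Prop) (l : List (ℝ × ℝ)) (v : ℝ × ℝ) : ℕ :=
  sSup (chainSet r l v)

lemma chain_nodup {r : ℝ × ℝ → ℝ × ℝ → Prop} (htr : Transitive r)
    (hne : ∀ a b, r a b → a ≠ b) {c : List (ℝ × ℝ)} (hc : c.Chain' r) : c.Nodup := by
  have : c.Pairwise r := by
    letI : IsTrans (ℝ × ℝ) r := ⟨htr⟩
    exact List.isChain_iff_pairwise.mp hc
  exact this.imp (fun h => hne _ _ h)

lemma chainSet_bdd {r : ℝ × ℝ → ℝ × ℝ → Prop} (htr : Transitive r)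
    (hne : ∀ a b, r a b → a ≠ b) (l : List (ℝ × ℝ)) (v : ℝ × ℝ) :
    ∀ k ∈ chainSet r l v, k ≤ l.length := by
  rintro k ⟨c, hc, hsub, -, rfl⟩
  exact ((chain_nodup htr hne hc).subperm hsub).length_le

lemma mem_chainSet_self {r : ℝ × ℝ → ℝ × ℝ → Prop} {l : List (ℝ × ℝ)} {v : ℝ × ℝ}
    (hv : v ∈ l) : 1 ∈ chainSet r l v :=
  ⟨[v], List.isChain_singleton v, by simpa using hv, rfl, rfl⟩

lemma mx_mem {r : ℝ × ℝ → ℝ × ℝ → Prop} (htr : Transitive r)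
    (hne : ∀ a b, r a b → a ≠ b) {l : List (ℝ × ℝ)} {v : ℝ × ℝ} (hv : v ∈ l) :
    mx r l v ∈ chainSet r l v :=
  Nat.sSup_mem ⟨1, mem_chainSet_self hv⟩ ⟨l.length, fun _ h => chainSet_bdd htr hne l v _ h⟩

lemma one_le_mx {r : ℝ × ℝ → ℝ × ℝ → Prop} (htr : Transitive r)
    (hne : ∀ a b, r a b → a ≠ b) {l : List (ℝ × ℝ)} {v : ℝ × ℝ} (hv : v ∈ l) :
    1 ≤ mx r l v :=
  le_csSup ⟨l.length, fun _ h => chainSet_bdd htr hne l v _ h⟩ (mem_chainSet_self hv)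

lemma mx_step {r : ℝ × ℝ → ℝ × ℝ → Prop} (htr : Transitive r)
    (hne : ∀ a b, r a b → a ≠ b) {l l' : List (ℝ × ℝ)} {u v : ℝ × ℝ}
    (hu : u ∈ l) (hll' : l ⊆ l') (hv : v ∈ l') (huv : r u v) :
    mx r l u + 1 ≤ mx r l' v := by
  obtain ⟨c, hc, hsub, hlast, hlen⟩ := mx_mem htr hne hu
  apply le_csSup ⟨l'.length, fun _ h => chainSet_bdd htr hne l' v _ h⟩
  refine ⟨c ++ [v], ?_, ?_, ?_, by simp [hlen]⟩
  · rw [List.Chain', List.isChain_append]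
    refine ⟨hc, List.isChain_singleton v, ?_⟩
    intro x hx y hy
    simp at hy
    rw [hlast] at hx
    simp at hx
    rw [← hx, ← hy]; exact huv
  · intro x hx
    rcases List.mem_append.mp hx with h | h
    · exact hll' (hsub x h)
    · simp at h; rw [h]; exact hv
  · simp

/-- Triangular numbers -/
def T : ℕ → ℕ
  | 0 => 0
  | s + 1 => T s + s + 1

lemma T_two_mul (s : ℕ) : 2 * T s = s * (s + 1) := by
  induction s with
  | zero => rfl
  | succ n ih => simp only [T]; rw [Nat.mul_add, Nat.mul_add, ih]; ring

lemma T_mono : Monotone T := monotone_nat_of_le_succ (fun n => by simp only [T]; omega)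

lemma encode_inj {a1 b1 a2 b2 : ℕ} (h : T (a1 + b1) + a1 = T (a2 + b2) + a2) :
    a1 = a2 ∧ b1 = b2 := by
  have key : ∀ s1 a1 s2 a2 : ℕ, a1 ≤ s1 → a2 ≤ s2 → s1 < s2 → T s1 + a1 < T s2 + a2 := by
    intro s1 a1 s2 a2 h1 h2 hs
    have : T (s1 + 1) ≤ T s2 := T_mono hs
    simp only [T] at this
    omega
  have hs : a1 + b1 = a2 + b2 := by
    rcases lt_trichotomy (a1 + b1) (a2 + b2) with hlt | he | hgt
    · exact absurd h (Nat.ne_of_lt (key _ _ _ _ (Nat.le_add_right _ _) (Nat.le_add_right _ _) hlt))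
    · exact he
    · exact absurd h.symm (Nat.ne_of_lt (key _ _ _ _ (Nat.le_add_right _ _) (Nat.le_add_right _ _) hgt))
  rw [hs] at h
  omega

noncomputable def Alg : List (ℝ × ℝ) → ℕ := fun l =>
  match l.getLast? with
  | none => 0
  | some v => T ((mx rel1 l v - 1) + (mx rel2 l v - 1)) + (mx rel1 l v - 1)

end Schmerl

open Schmerl


/-- Schmerl's on-line chain partition of 2-dimensional posets.
A 2-dimensional poset is presented on-line: element i comes with its positions
(p i).1, (p i).2 in the two linear orders (injective coordinates), and x < y iff
both coordinates are smaller. There is an on-line algorithm A (the label of the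
i-th element depends only on the presented prefix) using labels from a set of size
ω(ω+1)/2 on posets of width at most ω, such that equally labeled elements are
pairwise comparable. -/
theorem stmt2 :
    ∃ A : List (ℝ × ℝ) → ℕ,
      ∀ (ω n : ℕ) (p : Fin n → ℝ × ℝ),
        Function.Injective (fun i => (p i).1) →
        Function.Injective (fun i => (p i).2) →
        (∀ S : Finset (Fin n),
          (∀ i ∈ S, ∀ j ∈ S, i ≠ j →
            ¬((p i).1 < (p j).1 ∧ (p i).2 < (p j).2) ∧
            ¬((p j).1 < (p i).1 ∧ (p j).2 < (p i).2)) → S.card ≤ ω) →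
        (∀ i : Fin n, A (((List.finRange n).take (i.1 + 1)).map p) < ω * (ω + 1) / 2) ∧
        (∀ i j : Fin n, i ≠ j →
          A (((List.finRange n).take (i.1 + 1)).map p) =
            A (((List.finRange n).take (j.1 + 1)).map p) →
          ((p i).1 < (p j).1 ∧ (p i).2 < (p j).2) ∨
          ((p j).1 < (p i).1 ∧ (p j).2 < (p i).2)) := by
  classical
  refine ⟨Alg, ?_⟩
  intro ω n p hinj1 hinj2 hwidth
  have hpinj : Function.Injective p := fun a b h => hinj1 (by simp [h])
  set pre : Fin n → List (ℝ × ℝ) := fun i => ((List.finRange n).take (i.1 + 1)).map p with hpre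
  -- basic facts about prefixes
  have hmem : ∀ i k : Fin n, k ≤ i → p k ∈ pre i := by
    intro i k hk
    apply List.mem_map_of_mem
    have h1 : ((List.finRange n).take (i.1 + 1))[k.1]? = some k := by
      rw [List.getElem?_take, if_pos (by omega)]
      rw [List.getElem?_eq_getElem (by simpa using k.2)]
      simp [List.getElem_finRange]
    obtain ⟨h, he⟩ := List.getElem?_eq_some_iff.mp h1
    exact he ▸ List.getElem_mem h
  have hsubpre : ∀ i j : Fin n, i ≤ j → pre i ⊆ pre j := by
    intro i j hij x hx
    simp only [hpre, List.mem_map] at hx ⊢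
    obtain ⟨k, hk, hkx⟩ := hx
    refine ⟨k, ?_, hkx⟩
    have : (List.finRange n).take (i.1+1) = ((List.finRange n).take (j.1+1)).take (i.1+1) := by
      rw [List.take_take, min_eq_left (by omega)]
    rw [this] at hk
    exact List.take_subset _ _ hk
  have hlast : ∀ i : Fin n, (pre i).getLast? = some (p i) := by
    intro i
    rw [hpre]
    rw [List.getLast?_map]
    have hlen : ((List.finRange n).take (i.1 + 1)).length = i.1 + 1 := by
      simp [List.length_take]
    rw [List.getLast?_eq_getElem?, hlen]
    simp only [Nat.add_sub_cancel]
    rw [List.getElem?_take, if_pos (by omega)]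
    rw [List.getElem?_eq_getElem (by simpa using i.2)]
    simp [List.getElem_finRange]
  have hAlg : ∀ i : Fin n, Alg (pre i) =
      T ((mx rel1 (pre i) (p i) - 1) + (mx rel2 (pre i) (p i) - 1)) + (mx rel1 (pre i) (p i) - 1) := by
    intro i
    simp [Alg, hlast i]
  -- the antichain bound: alpha + beta - 1 ≤ ω
  have hbound : ∀ i : Fin n,
      (mx rel1 (pre i) (p i) - 1) + (mx rel2 (pre i) (p i) - 1) + 1 ≤ ω := by
    intro i
    obtain ⟨c1, hc1, hs1, hl1, hlen1⟩ := mx_mem rel1_trans (fun _ _ h => rel1_ne h) (hmem i i le_rfl)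
    obtain ⟨c2, hc2, hs2, hl2, hlen2⟩ := mx_mem rel2_trans (fun _ _ h => rel2_ne h) (hmem i i le_rfl)
    have hc1ne : c1 ≠ [] := by intro h; rw [h] at hl1; simp at hl1
    have hc2ne : c2 ≠ [] := by intro h; rw [h] at hl2; simp at hl2
    -- d is a rel1 chain of length (alpha - 1) + beta
    set d : List (ℝ × ℝ) := c1.dropLast ++ c2.reverse with hd
    have hdchain : d.Chain' rel1 := by
      letI : IsTrans (ℝ × ℝ) rel1 := ⟨rel1_trans⟩
      rw [hd, List.Chain', List.isChain_append]
      refine ⟨?_, ?_, ?_⟩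
      · have : c1.dropLast.Sublist c1 := List.dropLast_sublist c1
        exact hc1.sublist this
      · rw [List.isChain_reverse]
        exact hc2
      · intro x hx y hy
        have hy' : y = p i := by
          rw [List.head?_reverse, hl2] at hy
          simp at hy
          exact hy.symm
        -- x is the second-to-last of c1, rel1 x (last c1)
        have hdecomp := List.dropLast_append_getLast hc1ne
        have hlast1 : c1.getLast hc1ne = p i := by
          have := List.getLast?_eq_getLast (l := c1) hc1ne
          rw [hl1] at this
          exact (Option.some_injective _ this.symm)
        have := hc1
        rw [← hdecomp, List.Chain', List.isChain_append] at this
        have hr := this.2.2 x hx (c1.getLast hc1ne) (by simp)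
        rw [hlast1] at hr; rw [hy']; exact hr
    have hdpair : d.Pairwise rel1 := by
      letI : IsTrans (ℝ × ℝ) rel1 := ⟨rel1_trans⟩
      exact List.isChain_iff_pairwise.mp hdchain
    have hdnodup : d.Nodup := hdpair.imp (fun h => rel1_ne h)
    have hdsub : ∀ x ∈ d, x ∈ pre i := by
      intro x hx
      rcases List.mem_append.mp hx with h | h
      · exact hs1 x (List.dropLast_subset _ h)
      · exact hs2 x (List.mem_reverse.mp h)
    have hdlen : d.length = (mx rel1 (pre i) (p i) - 1) + (mx rel2 (pre i) (p i) - 1) + 1 := by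
      have h1 : 1 ≤ mx rel1 (pre i) (p i) := one_le_mx rel1_trans (fun _ _ h => rel1_ne h) (hmem i i le_rfl)
      have h2 : 1 ≤ mx rel2 (pre i) (p i) := one_le_mx rel2_trans (fun _ _ h => rel2_ne h) (hmem i i le_rfl)
      have : c1.dropLast.length = c1.length - 1 := List.length_dropLast
      simp only [hd, List.length_append, List.length_reverse]
      omega
    -- build the antichain in Fin n
    set S : Finset (Fin n) := Finset.univ.filter (fun j => p j ∈ d) with hS
    have hScard : S.card = d.length := by
      have himg : S.image p = d.toFinset := by
        ext x
        simp only [Finset.mem_image, List.mem_toFinset, hS, Finset.mem_filter, Finset.mem_univ, true_and]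
        constructor
        · rintro ⟨j, hj, rfl⟩; exact hj
        · intro hx
          obtain ⟨k, -, hk⟩ := List.mem_map.mp (hdsub x hx)
          exact ⟨k, by rw [hk]; exact hx, hk⟩
      have := Finset.card_image_of_injective S hpinj
      rw [himg] at this
      rw [← this, List.toFinset_card_of_nodup hdnodup]
    have hanti : S.card ≤ ω := by
      apply hwidth
      intro a ha b hb hab
      simp only [hS, Finset.mem_filter, Finset.mem_univ, true_and] at ha hb
      have hne : p a ≠ p b := fun h => hab (hpinj h)
      have : rel1 (p a) (p b) ∨ rel1 (p b) (p a) := by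
        have hsym : Symmetric (fun x y => rel1 x y ∨ rel1 y x) := fun x y h => h.symm
        letI : Std.Symm (fun x y => rel1 x y ∨ rel1 y x) := ⟨fun x y h => hsym h⟩
        have hp : d.Pairwise (fun x y => rel1 x y ∨ rel1 y x) := hdpair.imp (fun h => Or.inl h)
        exact hp.forall ha hb hne
      rcases this with ⟨h1, h2⟩ | ⟨h1, h2⟩
      · exact ⟨fun h => absurd h.2 (not_lt.mpr h2.le), fun h => absurd h.1 (not_lt.mpr h1.le)⟩
      · exact ⟨fun h => absurd h.1 (not_lt.mpr h1.le), fun h => absurd h.2 (not_lt.mpr h2.le)⟩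
    omega
  constructor
  · intro i
    rw [hAlg i]
    have hb := hbound i
    set a := mx rel1 (pre i) (p i) - 1
    set b := mx rel2 (pre i) (p i) - 1
    have h1 : T (a + b) + a < T (a + b + 1) := by simp only [T]; omega
    have h2 : T (a + b + 1) ≤ T ω := T_mono (by omega)
    have h3 : 2 * T ω = ω * (ω + 1) := T_two_mul ω
    omega
  · intro i j hij heq
    by_contra hcon
    push_neg at hcon
    obtain ⟨hc1, hc2⟩ := hcon
    -- incomparable: derive the two-direction facts
    have hx : (p i).1 ≠ (p j).1 := fun h => hij (hinj1 h)
    have hy : (p i).2 ≠ (p j).2 := fun h => hij (hinj2 h)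
    rw [hAlg i, hAlg j] at heq
    obtain ⟨ha, hb⟩ := encode_inj heq
    have h1i : 1 ≤ mx rel1 (pre i) (p i) := one_le_mx rel1_trans (fun _ _ h => rel1_ne h) (hmem i i le_rfl)
    have h2i : 1 ≤ mx rel2 (pre i) (p i) := one_le_mx rel2_trans (fun _ _ h => rel2_ne h) (hmem i i le_rfl)
    have h1j : 1 ≤ mx rel1 (pre j) (p j) := one_le_mx rel1_trans (fun _ _ h => rel1_ne h) (hmem j j le_rfl)
    have h2j : 1 ≤ mx rel2 (pre j) (p j) := one_le_mx rel2_trans (fun _ _ h => rel2_ne h) (hmem j j le_rfl)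
    rcases hij.lt_or_gt with hlt | hlt
    · -- i presented before j
      rcases hx.lt_or_gt with hxlt | hxlt
      · have hylt : (p j).2 < (p i).2 := by
          rcases hy.lt_or_gt with h | h
          · exact absurd (hc1 hxlt) (not_le.mpr h)
          · exact h
        have := mx_step rel1_trans (fun _ _ h => rel1_ne h) (hmem i i le_rfl)
          (hsubpre i j hlt.le) (hmem j j le_rfl) (show rel1 (p i) (p j) from ⟨hxlt, hylt⟩)
        omega
      · have hylt : (p i).2 < (p j).2 := by
          rcases hy.lt_or_gt with h | h
          · exact h
          · exact absurd (hc2 hxlt) (not_le.mpr h)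
        have := mx_step rel2_trans (fun _ _ h => rel2_ne h) (hmem i i le_rfl)
          (hsubpre i j hlt.le) (hmem j j le_rfl) (show rel2 (p i) (p j) from ⟨hxlt, hylt⟩)
        omega
    · -- j presented before i
      rcases hx.lt_or_gt with hxlt | hxlt
      · have hylt : (p j).2 < (p i).2 := by
          rcases hy.lt_or_gt with h | h
          · exact absurd (hc1 hxlt) (not_le.mpr h)
          · exact h
        have := mx_step rel2_trans (fun _ _ h => rel2_ne h) (hmem j j le_rfl)
          (hsubpre j i hlt.le) (hmem i i le_rfl) (show rel2 (p j) (p i) from ⟨hxlt, hylt⟩)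
        omega
      · have hylt : (p i).2 < (p j).2 := by
          rcases hy.lt_or_gt with h | h
          · exact h
          · exact absurd (hc2 hxlt) (not_le.mpr h)
        have := mx_step rel1_trans (fun _ _ h => rel1_ne h) (hmem j j le_rfl)
          (hsubpre j i hlt.le) (hmem i i le_rfl) (show rel1 (p j) (p i) from ⟨hxlt, hylt⟩)
        omega
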